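/- arXiv:0904.4176 — 3 statements merged into one kernel-verified Lean document; each statement's English description precedes it below -/
import Mathlib

section
/- Let d ≥ 1 be an integer and define P : ℕ → ℝ by P(d+1) = 1/2 and P(k) = ((d·k − d² − d + 1)/(d·k − d² + d + 2))·P(k−1) for k > d+1 (and P(k) = 0 for k < d+1). Then ∑_{k=d+1}^∞ P(k) = 1. -/
open Filter Finset Topology

theorem degree_dist_sums_to_one (d : ℕ) (hd : 1 ≤ d) (P : ℕ → ℝ)
    (hinit : P (d + 1) = 1 / 2)
    (hrec : ∀ k, d + 1 < k →
      P k = (((d : ℝ) * k - (d : ℝ) ^ 2 - (d : ℝ) + 1) /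
             ((d : ℝ) * k - (d : ℝ) ^ 2 + (d : ℝ) + 2)) * P (k - 1))
    (hzero : ∀ k, k < d + 1 → P k = 0) :
    ∑' k : ℕ, P k = 1 := by
  have hd1 : (1:ℝ) ≤ (d:ℝ) := by exact_mod_cast hd
  set Q : ℕ → ℝ := fun n => P (n + (d + 1)) with hQdef
  have hQ0 : Q 0 = 1/2 := by simp [hQdef, hinit]
  have hQrec : ∀ n : ℕ, Q (n+1) =
      (((d:ℝ)*(n+1)+1)/((d:ℝ)*(n+1)+2*d+2)) * Q n := by
    intro n
    have h1 : d + 1 < n + 1 + (d+1) := by omega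
    have h := hrec (n + 1 + (d+1)) h1
    have h2 : n + 1 + (d+1) - 1 = n + (d+1) := by omega
    rw [h2] at h
    show P (n + 1 + (d+1)) = _
    rw [h]
    congr 2
    · push_cast; ring
    · push_cast; ring
  have hden : ∀ n : ℕ, (0:ℝ) < (d:ℝ)*(n+1)+2*d+2 := by
    intro n; positivity
  have hnum : ∀ n : ℕ, (0:ℝ) < (d:ℝ)*(n+1)+1 := by
    intro n; positivity
  have hQnonneg : ∀ n, 0 ≤ Q n := by
    intro n
    induction n with
    | zero => rw [hQ0]; norm_num
    | succ n ih =>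
      rw [hQrec n]
      exact mul_nonneg (div_nonneg (hnum n).le (hden n).le) ih
  have hQbound : ∀ n : ℕ, Q n ≤ 3/(((n:ℝ)+2)*((n:ℝ)+3)) := by
    intro n
    induction n with
    | zero => rw [hQ0]; norm_num
    | succ n ih =>
      rw [hQrec n]
      have hr : ((d:ℝ)*(n+1)+1)/((d:ℝ)*(n+1)+2*d+2) ≤ ((n:ℝ)+2)/((n:ℝ)+4) := by
        rw [div_le_div_iff₀ (hden n) (by positivity)]
        nlinarith [Nat.cast_nonneg (α := ℝ) n]
      have h1 : ((d:ℝ)*(n+1)+1)/((d:ℝ)*(n+1)+2*d+2) * Q n ≤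
          (((n:ℝ)+2)/((n:ℝ)+4)) * (3/(((n:ℝ)+2)*((n:ℝ)+3))) := by
        apply mul_le_mul hr ih (hQnonneg n)
        positivity
      have h2 : (((n:ℝ)+2)/((n:ℝ)+4)) * (3/(((n:ℝ)+2)*((n:ℝ)+3))) =
          3/(((n:ℝ)+1+2)*((n:ℝ)+1+3)) := by
        have h3 : ((n:ℝ)+2) ≠ 0 := by positivity
        have h4 : ((n:ℝ)+3) ≠ 0 := by positivity
        have h5 : ((n:ℝ)+4) ≠ 0 := by positivity
        field_simp
        ring
      rw [Nat.cast_succ]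
      linarith [h1, h2.le]
  -- telescoping partial sums
  have hkey : ∀ n : ℕ, ∑ i ∈ Finset.range n, Q i =
      1 - ((d:ℝ)*n/((d:ℝ)+1)+2) * Q n := by
    intro n
    induction n with
    | zero => simp [hQ0]
    | succ n ih =>
      rw [Finset.sum_range_succ, ih, hQrec n]
      have hdd : (d:ℝ) + 1 ≠ 0 := by positivity
      have hc : ((d:ℝ)*n/((d:ℝ)+1)+2) - 1 =
          ((d:ℝ)*(n+1)/((d:ℝ)+1)+2) * (((d:ℝ)*(n+1)+1)/((d:ℝ)*(n+1)+2*d+2)) := by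
        have hdn : (d:ℝ)*(n+1)+2*d+2 ≠ 0 := (hden n).ne'
        field_simp
        ring
      push_cast
      linear_combination (-(Q n)) * hc
  -- tail tends to zero
  have hT0 : Tendsto (fun n : ℕ => ((d:ℝ)*n/((d:ℝ)+1)+2) * Q n) atTop (𝓝 0) := by
    apply squeeze_zero
    · intro n
      exact mul_nonneg (by positivity) (hQnonneg n)
    · intro n
      have hc : ((d:ℝ)*n/((d:ℝ)+1)+2) ≤ (n:ℝ)+2 := by
        have : (d:ℝ)*n/((d:ℝ)+1) ≤ (n:ℝ) := by
          rw [div_le_iff₀ (by positivity)]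
          nlinarith [Nat.cast_nonneg (α := ℝ) n]
        linarith
      calc ((d:ℝ)*n/((d:ℝ)+1)+2) * Q n ≤ ((n:ℝ)+2) * (3/(((n:ℝ)+2)*((n:ℝ)+3))) := by
            apply mul_le_mul hc (hQbound n) (hQnonneg n) (by positivity)
        _ = 3/((n:ℝ)+3) := by
            have h3 : ((n:ℝ)+2) ≠ 0 := by positivity
            field_simp
        _ ≤ 3/((n:ℝ)+3) := le_refl _
    · have h1 : Tendsto (fun n : ℕ => ((n:ℝ)+3)) atTop atTop :=
        tendsto_atTop_add_const_right _ 3 tendsto_natCast_atTop_atTop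
      have h2 : Tendsto (fun n : ℕ => ((n:ℝ)+3)⁻¹) atTop (𝓝 0) :=
        h1.inv_tendsto_atTop
      have h3 := h2.const_mul (3:ℝ)
      simpa [div_eq_mul_inv] using h3
  have hSum : Tendsto (fun n : ℕ => ∑ i ∈ Finset.range n, Q i) atTop (𝓝 1) := by
    have : (fun n : ℕ => ∑ i ∈ Finset.range n, Q i) =
        fun n => 1 - ((d:ℝ)*n/((d:ℝ)+1)+2) * Q n := funext hkey
    rw [this]
    simpa using tendsto_const_nhds.sub hT0
  have hHasSumQ : HasSum Q 1 :=
    (hasSum_iff_tendsto_nat_of_nonneg hQnonneg 1).mpr hSum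
  have hfin : ∑ i ∈ Finset.range (d+1), P i = 0 := by
    apply Finset.sum_eq_zero
    intro i hi
    exact hzero i (Finset.mem_range.mp hi)
  have hHasSumP : HasSum P 1 := by
    have := (hasSum_nat_add_iff (f := P) (d+1)).mp hHasSumQ
    rwa [hfin, add_zero] at this
  exact hHasSumP.tsum_eq
end

section
/- Let d ≥ 1 be an integer and let P(k) satisfy P(d+1) = 1/2 and P(k) = ((dk − d² − d + 1)/(dk − d² + d + 2))·P(k−1) for k > d+1. Then there exist positive constants c₁ ≤ c₂ such that c₁·k^(−(2d+1)/d) ≤ P(k) ≤ c₂·k^(−(2d+1)/d) for all k ≥ d+1. -/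
set_option maxHeartbeats 1000000 in
theorem degree_dist_power_law (d : ℕ) (hd : 1 ≤ d) (P : ℕ → ℝ)
    (hinit : P (d + 1) = 1 / 2)
    (hrec : ∀ k, d + 1 < k →
      P k = (((d : ℝ) * k - (d : ℝ) ^ 2 - (d : ℝ) + 1) /
             ((d : ℝ) * k - (d : ℝ) ^ 2 + (d : ℝ) + 2)) * P (k - 1)) :
    ∃ c₁ c₂ : ℝ, 0 < c₁ ∧ c₁ ≤ c₂ ∧
      ∀ k : ℕ, d + 1 ≤ k →
        c₁ * (k : ℝ) ^ (-(2 * (d : ℝ) + 1) / (d : ℝ)) ≤ P k ∧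
        P k ≤ c₂ * (k : ℝ) ^ (-(2 * (d : ℝ) + 1) / (d : ℝ)) := by
  have hD : (1:ℝ) ≤ (d:ℝ) := by exact_mod_cast hd
  obtain ⟨D, hDdef⟩ : ∃ D : ℝ, (d:ℝ) = D := ⟨_, rfl⟩
  rw [hDdef] at hD ⊢
  rw [show ((d:ℝ) = D) from hDdef] at hrec
  have hD0 : (0:ℝ) < D := lt_of_lt_of_le one_pos hD
  obtain ⟨α, hαdef⟩ : ∃ a : ℝ, a = (2*D+1)/D := ⟨_, rfl⟩
  have hα2 : α = 2 + 1/D := by rw [hαdef]; field_simp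
  have h1D : 0 < 1/D := by positivity
  have h1D1 : 1/D ≤ 1 := by rw [div_le_one hD0]; exact hD
  have hα1 : 1 ≤ α := by rw [hα2]; linarith
  have hα0 : 0 ≤ α := by linarith
  -- two-sided telescoped bounds
  have key : ∀ k : ℕ, d + 1 ≤ k →
      (1/2) * ((1+1/D)/((k:ℝ) - D + 1/D))^α ≤ P k ∧
      P k ≤ (1/2) * ((2+2/D)/((k:ℝ) - D + 1 + 2/D))^α := by
    intro k hk
    induction k, hk using Nat.le_induction with
    | base =>
        have h1 : ((d+1:ℕ):ℝ) - D + 1/D = 1 + 1/D := by push_cast; rw [hDdef]; ring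
        have h2 : ((d+1:ℕ):ℝ) - D + 1 + 2/D = 2 + 2/D := by push_cast; rw [hDdef]; ring
        rw [h1, h2, div_self (by positivity), div_self (by positivity),
          Real.one_rpow, hinit]
        norm_num
    | succ n hn ih =>
        have hN : D + 1 ≤ (n:ℝ) := by
          have : ((d+1:ℕ):ℝ) ≤ (n:ℝ) := by exact_mod_cast hn
          push_cast [hDdef] at this; linarith
        obtain ⟨x, hxdef⟩ : ∃ x : ℝ, x = (n:ℝ) - D + 1/D := ⟨_, rfl⟩
        rw [← hxdef] at ih
        have hx1 : 1 + 1/D ≤ x := by rw [hxdef]; linarith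
        have hx0 : 0 < x := lt_of_lt_of_le (by positivity) hx1
        have hxα : 0 < x + α := by linarith
        have hrecn := hrec (n+1) (by omega)
        rw [Nat.add_sub_cancel] at hrecn
        have hnum : D * ((n+1:ℕ):ℝ) - D^2 - D + 1 = D * x := by
          rw [hxdef]; push_cast; field_simp; try ring
        have hden : D * ((n+1:ℕ):ℝ) - D^2 + D + 2 = D * (x + α) := by
          rw [hxdef, hα2]; push_cast; field_simp; try ring
        rw [hnum, hden, mul_div_mul_left _ _ (ne_of_gt hD0)] at hrecn
        have hr0 : 0 ≤ x / (x + α) := by positivity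
        -- Bernoulli, lower form : (x/(x+1))^α ≤ x/(x+α)
        have hber1 : (x+α)/x ≤ ((x+1)/x)^α := by
          have h := one_add_mul_self_le_rpow_one_add
            (s := 1/x) (by have := one_div_pos.mpr hx0; linarith : (-1:ℝ) ≤ 1/x) hα1
          have e1 : (1:ℝ) + 1/x = (x+1)/x := by field_simp; try ring
          have e2 : (1:ℝ) + α * (1/x) = (x+α)/x := by field_simp; try ring
          rw [e1, e2] at h; exact h
        have hlow : (x/(x+1))^α ≤ x/(x+α) := by
          have hpos : 0 < (x+α)/x := by positivity
          have hinv := inv_anti₀ hpos hber1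
          rw [← Real.inv_rpow (by positivity), inv_div] at hinv
          rwa [inv_div] at hinv
        -- Bernoulli, upper form : x/(x+α) ≤ (y/(y+1))^α with y = x + α - 1
        have hupper : x/(x+α) ≤ ((x+α-1)/(x+α))^α := by
          have h := one_add_mul_self_le_rpow_one_add
            (s := -(1/(x+α))) (by
              have : 1/(x+α) ≤ 1 := by
                rw [div_le_one hxα]; linarith
              linarith) hα1
          have e1 : (1:ℝ) + -(1/(x+α)) = (x+α-1)/(x+α) := by field_simp; try ring
          have e2 : (1:ℝ) + α * -(1/(x+α)) = x/(x+α) := by field_simp; try ring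
          rw [e1, e2] at h; exact h
        constructor
        · -- lower bound
          have hb := ih.1
          have step : (1/2) * ((1+1/D)/(((n+1:ℕ):ℝ) - D + 1/D))^α
              ≤ (x/(x+α)) * ((1/2) * ((1+1/D)/x)^α) := by
            have hd1 : ((n+1:ℕ):ℝ) - D + 1/D = x + 1 := by rw [hxdef]; push_cast; ring
            rw [hd1]
            have hsplit : (1+1/D)/(x+1) = ((1+1/D)/x) * (x/(x+1)) := by
              field_simp
            rw [hsplit, Real.mul_rpow (by positivity) (by positivity)]
            have h1 : ((1+1/D)/x)^α * (x/(x+1))^α ≤ ((1+1/D)/x)^α * (x/(x+α)) :=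
              mul_le_mul_of_nonneg_left hlow (by positivity)
            linarith [h1]
          calc (1/2) * ((1+1/D)/(((n+1:ℕ):ℝ) - D + 1/D))^α
              ≤ (x/(x+α)) * ((1/2) * ((1+1/D)/x)^α) := step
            _ ≤ (x/(x+α)) * P n := mul_le_mul_of_nonneg_left hb hr0
            _ = P (n+1) := hrecn.symm
        · -- upper bound
          have hb := ih.2
          have hy : (n:ℝ) - D + 1 + 2/D = x + α - 1 := by
            rw [hxdef, hα2]; ring
          have hy' : ((n+1:ℕ):ℝ) - D + 1 + 2/D = x + α := by
            rw [hxdef, hα2]; push_cast; ring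
          have hypos : 0 < x + α - 1 := by linarith
          calc P (n+1) = (x/(x+α)) * P n := hrecn
            _ ≤ (x/(x+α)) * ((1/2) * ((2+2/D)/((n:ℝ) - D + 1 + 2/D))^α) :=
                mul_le_mul_of_nonneg_left hb hr0
            _ ≤ (1/2) * ((2+2/D)/(((n+1:ℕ):ℝ) - D + 1 + 2/D))^α := by
                rw [hy, hy']
                have hsplit : (2+2/D)/(x+α) = ((2+2/D)/(x+α-1)) * ((x+α-1)/(x+α)) := by
                  rw [div_mul_div_comm, div_eq_div_iff (by positivity) (by positivity)]
                  ring
                rw [hsplit, Real.mul_rpow (by positivity) (by positivity)]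
                have h1 : (x/(x+α)) * ((2+2/D)/(x+α-1))^α
                    ≤ ((x+α-1)/(x+α))^α * ((2+2/D)/(x+α-1))^α :=
                  mul_le_mul_of_nonneg_right hupper (by positivity)
                linarith [h1]
    done
  -- conversion to power law
  have main : ∀ k : ℕ, d + 1 ≤ k →
      (1/2) * (k:ℝ)^(-α) ≤ P k ∧ P k ≤ ((1/2) * (4*(D+1))^α) * (k:ℝ)^(-α) := by
    intro k hk
    obtain ⟨hl, hu⟩ := key k hk
    have hkR : D + 1 ≤ (k:ℝ) := by
      have : ((d+1:ℕ):ℝ) ≤ (k:ℝ) := by exact_mod_cast hk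
      push_cast at this; linarith
    have hk0 : (0:ℝ) < k := by linarith
    have hx0 : 0 < (k:ℝ) - D + 1/D := by linarith
    have h2D : (0:ℝ) < 2/D := by positivity
    have h2D1 : 2/D ≤ 2 := by rw [div_le_iff₀ hD0]; linarith
    have hDD : D * (2/D) = 2 := by field_simp
    have hy0 : 0 < (k:ℝ) - D + 1 + 2/D := by linarith
    have hkneg : (k:ℝ)^(-α) = (1/(k:ℝ))^α := by
      rw [one_div, Real.inv_rpow hk0.le, Real.rpow_neg hk0.le]
    constructor
    · refine le_trans ?_ hl
      rw [hkneg]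
      have hle : (1:ℝ)/(k:ℝ) ≤ (1+1/D)/((k:ℝ) - D + 1/D) := by
        rw [div_le_div_iff₀ hk0 hx0]
        nlinarith
      have h := Real.rpow_le_rpow (by positivity) hle hα0
      linarith [h]
    · refine le_trans hu ?_
      rw [hkneg]
      have hle : (2+2/D)/((k:ℝ) - D + 1 + 2/D) ≤ (4*(D+1)) * (1/(k:ℝ)) := by
        rw [mul_one_div, div_le_div_iff₀ hy0 hk0]
        nlinarith [mul_pos hD0 (show (0:ℝ) < (k:ℝ) - D by linarith),
          mul_le_mul_of_nonneg_right h2D1 hk0.le, hDD, h2D, hkR, hD]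
      have h := Real.rpow_le_rpow (by positivity) hle hα0
      rw [Real.mul_rpow (by positivity) (by positivity)] at h
      calc (1/2:ℝ) * ((2+2/D)/((k:ℝ) - D + 1 + 2/D))^α
          ≤ (1/2:ℝ) * ((4*(D+1))^α * (1/(k:ℝ))^α) :=
            mul_le_mul_of_nonneg_left h (by norm_num)
        _ = (1/2) * (4*(D+1))^α * (1/(k:ℝ))^α := by ring
  refine ⟨1/2, (1/2) * (4*(D+1))^α, by norm_num, ?_, ?_⟩
  · obtain ⟨h1, h2⟩ := main (d+1) le_rfl
    have ht : (0:ℝ) < ((d+1:ℕ):ℝ)^(-α) :=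
      Real.rpow_pos_of_pos (by positivity) _
    exact le_of_mul_le_mul_right (le_trans h1 h2) ht
  · intro k hk
    rw [neg_div, ← hαdef]
    exact main k hk
end

section
/- Let σ : ℕ → ℝ be nonnegative and satisfy σ(N+1) ≤ σ(N) + N + 2σ(N)/N for all N ≥ 2. Then the average path length L(N) = 2σ(N)/(N(N−1)) satisfies L(N) = O(log N); that is, there is a constant C such that L(N) ≤ C·log N for all sufficiently large N. -/
theorem apl_log_bound (σ : ℕ → ℝ) (hnn : ∀ N, 0 ≤ σ N)
    (hrec : ∀ N : ℕ, 2 ≤ N → σ (N + 1) ≤ σ N + (N : ℝ) + 2 * σ N / (N : ℝ)) :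
    ∃ C : ℝ, ∃ N₀ : ℕ, ∀ N : ℕ, N₀ ≤ N →
      2 * σ N / ((N : ℝ) * ((N : ℝ) - 1)) ≤ C * Real.log (N : ℝ) := by
  set c : ℝ := σ 2 / 6 with hc_def
  have hc : 0 ≤ c := div_nonneg (hnn 2) (by norm_num)
  -- key inductive bound
  have key : ∀ N : ℕ, 2 ≤ N → σ N ≤ (N : ℝ) * ((N : ℝ) + 1) * (c + Real.log N) := by
    intro N hN
    induction N, hN using Nat.le_induction with
    | base =>
      have h2 : (0:ℝ) ≤ Real.log 2 := Real.log_nonneg (by norm_num)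
      have : σ 2 = 6 * c := by rw [hc_def]; ring
      rw [this]
      push_cast
      nlinarith
    | succ n hn IH =>
      have hnpos : (0:ℝ) < n := by exact_mod_cast Nat.lt_of_lt_of_le (by norm_num) hn
      have hrec' := hrec n hn
      -- σ (n+1) ≤ (n+1)(n+2)(c + log n) + n
      have step1 : σ (n + 1) ≤ ((n:ℝ)+1) * ((n:ℝ)+2) * (c + Real.log n) + n := by
        have hb : σ n + (n:ℝ) + 2 * σ n / n = σ n * (((n:ℝ)+2)/n) + n := by
          field_simp; ring
        have hlog : 0 ≤ c + Real.log n :=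
          add_nonneg hc (Real.log_nonneg (by exact_mod_cast Nat.one_le_of_lt hn))
        have hmul : σ n * (((n:ℝ)+2)/n) ≤
            ((n:ℝ) * ((n:ℝ)+1) * (c + Real.log n)) * (((n:ℝ)+2)/n) := by
          apply mul_le_mul_of_nonneg_right IH (by positivity)
        have heq : ((n:ℝ) * ((n:ℝ)+1) * (c + Real.log n)) * (((n:ℝ)+2)/n)
            = ((n:ℝ)+1) * ((n:ℝ)+2) * (c + Real.log n) := by
          field_simp
        calc σ (n+1) ≤ σ n + (n:ℝ) + 2 * σ n / n := hrec'
          _ = σ n * (((n:ℝ)+2)/n) + n := hb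
          _ ≤ ((n:ℝ)+1) * ((n:ℝ)+2) * (c + Real.log n) + n := by
              rw [heq] at hmul; linarith
      -- log (n+1) - log n ≥ 1/(n+1)
      have hloggap : 1 / ((n:ℝ)+1) ≤ Real.log ((n:ℝ)+1) - Real.log n := by
        have hx : (0:ℝ) < ((n:ℝ)) / ((n:ℝ)+1) := by positivity
        have := Real.log_le_sub_one_of_pos hx
        have hld : Real.log ((n:ℝ) / ((n:ℝ)+1)) = Real.log n - Real.log ((n:ℝ)+1) := by
          rw [Real.log_div (ne_of_gt hnpos) (by positivity)]
        rw [hld] at this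
        have h1 : (n:ℝ) / ((n:ℝ)+1) - 1 = - (1 / ((n:ℝ)+1)) := by field_simp; ring
        linarith [this, h1 ▸ this]
      -- conclude
      have hn1 : ((n:ℝ)+1) * ((n:ℝ)+2) * (c + Real.log n) + n
          ≤ ((n:ℝ)+1) * ((n:ℝ)+2) * (c + Real.log ((n:ℝ)+1)) := by
        have hfac : ((n:ℝ)+1) * ((n:ℝ)+2) * (1 / ((n:ℝ)+1)) = (n:ℝ)+2 := by
          field_simp
        nlinarith [mul_le_mul_of_nonneg_left hloggap
          (by positivity : (0:ℝ) ≤ ((n:ℝ)+1) * ((n:ℝ)+2))]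
      have : σ (n+1) ≤ ((n:ℝ)+1) * ((n:ℝ)+2) * (c + Real.log ((n:ℝ)+1)) :=
        le_trans step1 hn1
      push_cast
      convert this using 3 <;> push_cast <;> ring
  -- main conclusion
  refine ⟨4 * (c + 1), 3, fun N hN => ?_⟩
  have hN2 : 2 ≤ N := le_trans (by norm_num) hN
  have hNr : (3:ℝ) ≤ N := by exact_mod_cast hN
  have hNpos : (0:ℝ) < N := by linarith
  have hNm1 : (0:ℝ) < (N:ℝ) - 1 := by linarith
  have hlog1 : (1:ℝ) ≤ Real.log N := by
    rw [Real.le_log_iff_exp_le hNpos]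
    have := Real.exp_one_lt_d9
    nlinarith
  have hkey := key N hN2
  -- 2 σ N / (N (N-1)) ≤ 2 (N+1)(c + log N)/(N-1) ≤ 4 (c + log N) ≤ 4(c+1) log N
  rw [div_le_iff₀ (by positivity)]
  have h1 : 2 * σ N ≤ 2 * ((N:ℝ) * ((N:ℝ)+1) * (c + Real.log N)) := by linarith
  have hlognn : (0:ℝ) ≤ Real.log N := by linarith
  have hA : (N:ℝ)+1 ≤ 2*((N:ℝ)-1) := by linarith
  have hB : c + Real.log N ≤ (c+1) * Real.log N := by nlinarith
  have hBnn : 0 ≤ c + Real.log N := by linarith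
  have h2 : 2 * ((N:ℝ) * ((N:ℝ)+1) * (c + Real.log N))
      ≤ 4 * (c + 1) * Real.log N * ((N:ℝ) * ((N:ℝ)-1)) := by
    have s1 : (N:ℝ) * ((N:ℝ)+1) * (c + Real.log N)
        ≤ (N:ℝ) * (2*((N:ℝ)-1)) * (c + Real.log N) := by
      apply mul_le_mul_of_nonneg_right _ hBnn
      exact mul_le_mul_of_nonneg_left hA hNpos.le
    have s2 : (N:ℝ) * (2*((N:ℝ)-1)) * (c + Real.log N)
        ≤ (N:ℝ) * (2*((N:ℝ)-1)) * ((c+1) * Real.log N) := by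
      apply mul_le_mul_of_nonneg_left hB
      nlinarith
    nlinarith [s1, s2]
  linarith
end
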